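/- ℂ(x²)·φ(D(q)) = (ℂ(x)#ℤ)^{S₂} = φ(D(q))·ℂ(x²), where ℂ(x²)·φ(D(q)) (respectively φ(D(q))·ℂ(x²)) denotes the set of finite sums Σ gᵢ(x²)·φ(dᵢ) (respectively Σ φ(dᵢ)·gᵢ(x²)) with gᵢ(x²) ∈ ℂ(x²) and dᵢ ∈ D(q). In other words, D(q) is a Galois ring with respect to ℂ[u]. -/

import Mathlib

noncomputable section

open Polynomial

namespace KleinD

/-- The three generators of the free algebra. -/
def U : FreeAlgebra ℂ (Fin 3) := FreeAlgebra.ι ℂ 0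
def V : FreeAlgebra ℂ (Fin 3) := FreeAlgebra.ι ℂ 1
def W : FreeAlgebra ℂ (Fin 3) := FreeAlgebra.ι ℂ 2

/-- ρ = 2 q(-1/2). -/
def rho (q : ℂ[X]) : ℂ := 2 * q.eval (-(1/2 : ℂ))

/-- The condition that p₀, p₁ satisfy `(1+2t)² (p₀(t²) + p₁(t²) t) = -4 q(t) q(-t-1) + ρ²`. -/
def pCond (q p₀ p₁ : ℂ[X]) : Prop :=
  (1 + 2 * X) ^ 2 * (p₀.comp (X ^ 2) + p₁.comp (X ^ 2) * X)
    = -4 * q * q.comp (-X - 1) + C (rho q) ^ 2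

/-- The defining relations of `D(q)`. -/
inductive DqRel (q p₀ p₁ : ℂ[X]) : FreeAlgebra ℂ (Fin 3) → FreeAlgebra ℂ (Fin 3) → Prop
  | rel1 : DqRel q p₀ p₁ (U * V - V * U) (2 * W + V)
  | rel2 : DqRel q p₀ p₁ (U * W - W * U)
      (2 * V * U + W + algebraMap ℂ (FreeAlgebra ℂ (Fin 3)) (rho q))
  | rel3 : DqRel q p₀ p₁ (V * W - W * V) (-(V * V) - Polynomial.aeval U p₁)
  | rel4 : DqRel q p₀ p₁ (W * W)
      (V * V * U + V * W + algebraMap ℂ (FreeAlgebra ℂ (Fin 3)) (rho q) * V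
        + Polynomial.aeval U p₀)

/-- The noncommutative type D Kleinian singularity `D(q)`. -/
abbrev Dq (q p₀ p₁ : ℂ[X]) := RingQuot (DqRel q p₀ p₁)

def uD (q p₀ p₁ : ℂ[X]) : Dq q p₀ p₁ := RingQuot.mkAlgHom ℂ (DqRel q p₀ p₁) U
def vD (q p₀ p₁ : ℂ[X]) : Dq q p₀ p₁ := RingQuot.mkAlgHom ℂ (DqRel q p₀ p₁) V
def wD (q p₀ p₁ : ℂ[X]) : Dq q p₀ p₁ := RingQuot.mkAlgHom ℂ (DqRel q p₀ p₁) W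

/-- `ℂ(x)`, the field of rational functions. -/
abbrev L := RatFunc ℂ

/-- `x ∈ ℂ(x)`. -/
def xL : L := RatFunc.X

/-- The ℂ-algebra automorphism `τ` of ℂ(x), determined by `x ↦ -x`. -/
def tauL : L ≃ₐ[ℂ] L :=
  IsFractionRing.algEquivOfAlgEquiv (Polynomial.algEquivAevalNegX (R := ℂ))

/-- The ℂ-algebra automorphism `δ` of ℂ(x), determined by `x ↦ x - 1`. -/
def deltaL : L ≃ₐ[ℂ] L :=
  IsFractionRing.algEquivOfAlgEquiv (Polynomial.algEquivAevalXAddC (-1 : ℂ))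

/-- Left multiplication by a rational function, as a ℂ-linear endomorphism of ℂ(x). -/
def mulE (f : L) : Module.End ℂ L := Algebra.lmul ℂ L f

/-- `δ` as an endomorphism: `g(x) ↦ g(x-1)`. -/
def deltaE : Module.End ℂ L := deltaL.toLinearMap
/-- `δ⁻¹` as an endomorphism: `g(x) ↦ g(x+1)`. -/
def deltaInvE : Module.End ℂ L := deltaL.symm.toLinearMap
/-- `τ` as an endomorphism: `g(x) ↦ g(-x)`. -/
def tauE : Module.End ℂ L := tauL.toLinearMap

/-- The skew group algebra `ℂ(x)#ℤ`, realized (via its faithful action on `ℂ(x)`) as the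
subalgebra of `End_ℂ(ℂ(x))` generated by all multiplication operators `f·` together with
the shift automorphisms `δ` and `δ⁻¹`; its elements are exactly the finite sums
`Σ fₖ δᵏ`. -/
def CxZ : Subalgebra ℂ (Module.End ℂ L) :=
  Algebra.adjoin ℂ (Set.range mulE ∪ {deltaE, deltaInvE})

/-- `q(x) ∈ ℂ(x)` for a polynomial `q`. -/
def pol (q : ℂ[X]) : L := algebraMap ℂ[X] L q

/-- The constant rational function `c`. -/
def cst (c : ℂ) : L := algebraMap ℂ L c

/-- The image of `φ(u) = x²`. -/
def phiU : Module.End ℂ L := mulE (xL ^ 2)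

/-- The prescribed value of `φ(-v-w)`. -/
def phiMVW (q : ℂ[X]) : Module.End ℂ L :=
  (1/2 : ℂ) • (mulE (pol q / (cst (1/2) + xL)) * deltaInvE
    + mulE (tauL (pol q) / (cst (1/2) - xL)) * deltaE
    - mulE (cst (q.eval (-(1/2 : ℂ))) / ((cst (1/2) + xL) * (cst (1/2) - xL))))

/-- The prescribed value of `φ(-(1/2)v-w)`. -/
def phiMHVW (q : ℂ[X]) : Module.End ℂ L :=
  (1/2 : ℂ) • (mulE (pol q / xL) * deltaInvE - mulE (tauL (pol q) / xL) * deltaE)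

end KleinD

namespace KleinD

/-- The `S₂`-invariant subalgebra `(ℂ(x)#ℤ)^{S₂}`, as a subset of `End_ℂ(ℂ(x))`:
those elements of `ℂ(x)#ℤ` fixed by conjugation by `τ`. -/
def CxZS2 : Set (Module.End ℂ L) := {Y | Y ∈ CxZ ∧ tauE * Y * tauE = Y}

end KleinD

namespace KleinD

open Polynomial

lemma mulE_apply (f g : L) : mulE f g = f * g := rfl
lemma mulE_mul (f g : L) : mulE f * mulE g = mulE (f * g) := (map_mul (Algebra.lmul ℂ L) f g).symm
lemma mulE_one : mulE (1 : L) = 1 := map_one (Algebra.lmul ℂ L)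
lemma mulE_add (f g : L) : mulE (f + g) = mulE f + mulE g := map_add (Algebra.lmul ℂ L) f g
lemma mulE_smul (c : ℂ) (f : L) : mulE (c • f) = c • mulE f :=
  map_smul (Algebra.lmul ℂ L).toLinearMap c f

/-- `δ^j` as an algebra automorphism. -/
def djA (j : ℤ) : L ≃ₐ[ℂ] L := (deltaL ^ j : L ≃ₐ[ℂ] L)

/-- `δ^j` applied to a rational function. -/
def dj (j : ℤ) (f : L) : L := djA j f

/-- `δ^j` as an endomorphism. -/
def Dj (j : ℤ) : Module.End ℂ L := (djA j).toLinearMap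

lemma Dj_zero : Dj 0 = 1 := by
  ext z; simp [Dj, djA]

lemma Dj_mul (i j : ℤ) : Dj i * Dj j = Dj (i + j) := by
  ext z
  simp only [Dj, djA, Module.End.mul_apply, AlgEquiv.toLinearMap_apply, ← AlgEquiv.mul_apply,
    ← zpow_add]

lemma dj_dj (i j : ℤ) (z : L) : dj i (dj j z) = dj (i + j) z := by
  simp only [dj, djA, ← AlgEquiv.mul_apply, ← zpow_add]

lemma dj_zero (z : L) : dj 0 z = z := by simp [dj, djA]

lemma Dj_mulE (j : ℤ) (f : L) : Dj j * mulE f = mulE (dj j f) * Dj j := by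
  ext z
  simp only [Dj, dj, Module.End.mul_apply, AlgEquiv.toLinearMap_apply, mulE_apply, map_mul]

lemma genMul (f : L) (i : ℤ) (g : L) (j : ℤ) :
    (mulE f * Dj i) * (mulE g * Dj j) = mulE (f * dj i g) * Dj (i + j) := by
  rw [mul_assoc, ← mul_assoc (Dj i), Dj_mulE, mul_assoc, Dj_mul, ← mul_assoc, mulE_mul]

lemma Dj_one : Dj 1 = deltaE := by
  ext z; simp [Dj, djA, deltaE]

lemma Dj_neg_one : Dj (-1) = deltaInvE := by
  ext z
  simp only [Dj, djA, zpow_neg, zpow_one, deltaInvE, AlgEquiv.toLinearMap_apply]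
  rfl

end KleinD
namespace KleinD

open Polynomial

lemma xL_eq : xL = algebraMap ℂ[X] L X := (RatFunc.algebraMap_X (K := ℂ)).symm

lemma L_ringHom_ext {f g : L →+* L} (hC : ∀ c : ℂ, f (cst c) = g (cst c))
    (hX : f xL = g xL) : f = g := by
  apply IsLocalization.ringHom_ext (nonZeroDivisors ℂ[X])
  apply Polynomial.ringHom_ext
  · intro a
    have : algebraMap ℂ[X] L (C a) = cst a := by
      rw [cst, IsScalarTower.algebraMap_apply ℂ ℂ[X] L]
      rfl
    simpa [this] using hC a
  · simpa [xL] using hX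

lemma algEquiv_ext {e₁ e₂ : L ≃ₐ[ℂ] L} (hX : e₁ xL = e₂ xL) : e₁ = e₂ := by
  have h : (e₁ : L →+* L) = (e₂ : L →+* L) := by
    apply L_ringHom_ext _ hX
    intro c
    simp only [RingHom.coe_coe, cst]
    rw [AlgEquiv.commutes, AlgEquiv.commutes]
  ext z
  exact DFunLike.congr_fun h z

lemma tauL_cst (c : ℂ) : tauL (cst c) = cst c := AlgEquiv.commutes tauL c

lemma cst_add (a b : ℂ) : cst (a + b) = cst a + cst b := map_add (algebraMap ℂ L) a b
lemma cst_one : cst (1 : ℂ) = 1 := map_one (algebraMap ℂ L)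
lemma cst_neg (a : ℂ) : cst (-a) = -cst a := map_neg (algebraMap ℂ L) a

lemma tauL_X : tauL xL = -xL := by
  rw [xL_eq, tauL, IsFractionRing.algEquivOfAlgEquiv_algebraMap]
  simp

lemma deltaL_X : deltaL xL = xL - 1 := by
  rw [xL_eq, deltaL, IsFractionRing.algEquivOfAlgEquiv_algebraMap]
  simp [sub_eq_add_neg]

lemma tauL_mul_tauL : tauL * tauL = 1 := by
  apply algEquiv_ext
  rw [AlgEquiv.mul_apply, tauL_X, map_neg, tauL_X, neg_neg, AlgEquiv.one_apply]

lemma tauL_invol (z : L) : tauL (tauL z) = z := by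
  calc tauL (tauL z) = (tauL * tauL) z := rfl
    _ = z := by rw [tauL_mul_tauL]; rfl

lemma tauL_inv : tauL⁻¹ = tauL := by
  rw [inv_eq_iff_mul_eq_one, tauL_mul_tauL]

lemma tau_delta_tau : tauL * deltaL * tauL = deltaL⁻¹ := by
  apply algEquiv_ext
  have h1 : (tauL * deltaL * tauL) xL = xL + 1 := by
    simp only [AlgEquiv.mul_apply, tauL_X, map_neg, deltaL_X, map_sub, tauL_X, map_one]
    ring
  have h2 : (deltaL⁻¹) xL = xL + 1 := by
    have h3 : deltaL ((deltaL⁻¹) xL) = deltaL (xL + 1) := by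
      rw [map_add, deltaL_X, map_one]
      have h4 : deltaL (deltaL⁻¹ xL) = (deltaL * deltaL⁻¹) xL := rfl
      rw [h4, mul_inv_cancel]
      simp only [AlgEquiv.one_apply]
      ring
    exact deltaL.injective h3
  rw [h1, h2]

lemma tau_zpow (j : ℤ) : tauL * (deltaL ^ j) * tauL = deltaL ^ (-j) := by
  have h := map_zpow (MulAut.conj tauL) deltaL j
  rw [MulAut.conj_apply, MulAut.conj_apply, tauL_inv, tau_delta_tau] at h
  rw [h, inv_zpow, ← zpow_neg]

lemma tauL_dj (j : ℤ) (z : L) : tauL (dj j z) = dj (-j) (tauL z) := by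
  have h := tau_zpow j
  calc tauL (dj j z) = (tauL * deltaL ^ j) z := rfl
    _ = (tauL * deltaL ^ j * tauL) (tauL z) := by
        rw [AlgEquiv.mul_apply (tauL * deltaL ^ j) tauL, tauL_invol]
    _ = dj (-j) (tauL z) := by rw [h]; rfl

lemma dj_cst (j : ℤ) (c : ℂ) : dj j (cst c) = cst c := AlgEquiv.commutes (djA j) c
lemma dj_map_add (j : ℤ) (a b : L) : dj j (a + b) = dj j a + dj j b := map_add (djA j) a b
lemma dj_map_sub (j : ℤ) (a b : L) : dj j (a - b) = dj j a - dj j b := map_sub (djA j) a b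
lemma dj_map_one (j : ℤ) : dj j (1 : L) = 1 := map_one (djA j)
lemma dj_map_mul (j : ℤ) (a b : L) : dj j (a * b) = dj j a * dj j b := map_mul (djA j) a b
lemma dj_map_smul (j : ℤ) (c : ℂ) (a : L) : dj j (c • a) = c • dj j a := by
  simp only [Algebra.smul_def, dj_map_mul]
  congr 1
  exact AlgEquiv.commutes (djA j) c
lemma dj_one_X : dj 1 xL = xL - 1 := by
  show djA 1 xL = _
  simp only [djA, zpow_one]; exact deltaL_X

lemma dj_neg_one_X : dj (-1) xL = xL + 1 := by
  have h : dj 1 (dj (-1) xL) = dj 1 (xL + 1) := by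
    rw [dj_dj, dj_map_add, dj_one_X, dj_map_one]
    norm_num [dj_zero]
  exact (djA 1).injective h

lemma dj_X (j : ℤ) : dj j xL = xL - cst (j : ℂ) := by
  induction j using Int.induction_on with
  | zero => simp [dj_zero, cst]
  | succ n ih =>
    have h0 : dj ((n : ℤ) + 1) xL = dj ((1 : ℤ) + (n : ℤ)) xL := by congr 1; ring
    rw [h0, ← dj_dj, ih, dj_map_sub, dj_cst]
    have e : cst (((n : ℤ) + 1 : ℤ) : ℂ) = cst ((n : ℤ) : ℂ) + 1 := by
      push_cast [cst, map_add, map_one]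
      norm_num
    rw [dj_one_X, e]
    ring
  | pred n ih =>
    have h0 : dj (-(n : ℤ) - 1) xL = dj ((-1 : ℤ) + (-(n : ℤ))) xL := by congr 1; ring
    rw [h0, ← dj_dj, ih, dj_map_sub, dj_neg_one_X, dj_cst]
    have e : cst ((-(n : ℤ) - 1 : ℤ) : ℂ) = cst ((-(n:ℤ) : ℤ) : ℂ) - 1 := by
      push_cast [cst, map_sub, map_neg, map_one]
      norm_num
    rw [e]
    ring

end KleinD
namespace KleinD

open Polynomial

lemma mulE_neg (f : L) : mulE (-f) = -mulE f := map_neg (Algebra.lmul ℂ L) f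

lemma tauE_tauE : tauE * tauE = 1 := by
  ext z
  simp [tauE, Module.End.mul_apply, tauL_invol]

lemma tauE_mulE (f : L) : tauE * mulE f * tauE = mulE (tauL f) := by
  ext z
  simp only [tauE, Module.End.mul_apply, AlgEquiv.toLinearMap_apply, mulE_apply, map_mul,
    tauL_invol]

lemma tauE_Dj (j : ℤ) : tauE * Dj j * tauE = Dj (-j) := by
  have h := tau_zpow j
  ext z
  simp only [tauE, Dj, djA, Module.End.mul_apply, AlgEquiv.toLinearMap_apply]
  calc tauL ((deltaL ^ j) (tauL z)) = (tauL * deltaL ^ j * tauL) z := rfl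
    _ = (deltaL ^ (-j)) z := by rw [h]

/-- Conjugation by `τ`. -/
def conjE (Y : Module.End ℂ L) : Module.End ℂ L := tauE * Y * tauE

lemma conjE_mul (X Y : Module.End ℂ L) : conjE (X * Y) = conjE X * conjE Y := by
  unfold conjE
  have h : tauE * tauE = 1 := tauE_tauE
  calc tauE * (X * Y) * tauE = tauE * X * (tauE * tauE) * Y * tauE := by rw [h]; noncomm_ring
    _ = tauE * X * tauE * (tauE * Y * tauE) := by noncomm_ring

lemma conjE_add (X Y : Module.End ℂ L) : conjE (X + Y) = conjE X + conjE Y := by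
  unfold conjE; noncomm_ring

lemma conjE_sub (X Y : Module.End ℂ L) : conjE (X - Y) = conjE X - conjE Y := by
  unfold conjE; noncomm_ring

lemma conjE_smul (c : ℂ) (X : Module.End ℂ L) : conjE (c • X) = c • conjE X := by
  unfold conjE
  rw [mul_smul_comm, smul_mul_assoc]

lemma conjE_pow (X : Module.End ℂ L) (n : ℕ) : conjE (X ^ n) = conjE X ^ n := by
  induction n with
  | zero =>
    simp only [pow_zero]
    unfold conjE
    rw [mul_one, tauE_tauE]
  | succ n ih => rw [pow_succ, conjE_mul, ih, pow_succ]

lemma conjE_gen (f : L) (j : ℤ) : conjE (mulE f * Dj j) = mulE (tauL f) * Dj (-j) := by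
  rw [conjE_mul]
  show (tauE * mulE f * tauE) * (tauE * Dj j * tauE) = _
  rw [tauE_mulE, tauE_Dj]

end KleinD
namespace KleinD

open Polynomial

lemma pol_injective : Function.Injective (pol) := IsFractionRing.injective ℂ[X] L

lemma pol_ne_zero {q : ℂ[X]} (hq : q ≠ 0) : pol q ≠ 0 := by
  intro h
  exact hq (pol_injective (h.trans (map_zero (algebraMap ℂ[X] L)).symm))

lemma cst_ne_zero {c : ℂ} (hc : c ≠ 0) : cst c ≠ 0 := by
  intro h
  exact hc ((algebraMap ℂ L).injective (h.trans (map_zero (algebraMap ℂ L)).symm))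

lemma xL_ne_zero : xL ≠ 0 := by
  rw [xL_eq]
  exact pol_ne_zero X_ne_zero

lemma cst_add_xL_ne_zero (c : ℂ) : cst c + xL ≠ 0 := by
  have h : cst c + xL = pol (C c + X) := by
    rw [pol, map_add, xL_eq, cst, IsScalarTower.algebraMap_apply ℂ ℂ[X] L]
    rfl
  rw [h]
  apply pol_ne_zero
  intro h0
  have := X_add_C_ne_zero (R := ℂ) c
  rw [add_comm] at h0
  exact this h0

lemma xL_add_cst_ne_zero (c : ℂ) : xL + cst c ≠ 0 := by
  rw [add_comm]; exact cst_add_xL_ne_zero c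

lemma xL_sub_cst_ne_zero (c : ℂ) : xL - cst c ≠ 0 := by
  rw [sub_eq_add_neg, ← cst_neg]
  exact xL_add_cst_ne_zero (-c)

lemma cst_sub_xL_ne_zero (c : ℂ) : cst c - xL ≠ 0 := by
  intro h
  apply xL_sub_cst_ne_zero c
  rw [show xL - cst c = -(cst c - xL) by ring, h, neg_zero]

/-- The "solving" lemma for an involution. -/
lemma solve (e : L ≃ₐ[ℂ] L) (he : ∀ z, e (e z) = z) (u v f : L)
    (hdet : u * e v - v * e u ≠ 0) :
    ∃ g h : L, e g = g ∧ e h = h ∧ u * g + v * h = f := by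
  set den := u * e v - v * e u with hden
  refine ⟨(f * e v - e f * v) / den, (e f * u - f * e u) / den, ?_, ?_, ?_⟩
  · have hEden : e den = -den := by
      rw [hden, map_sub, map_mul, map_mul, he, he]; ring
    rw [map_div₀, hEden, map_sub, map_mul, map_mul, he, he]
    rw [show e f * v - f * e v = -(f * e v - e f * v) by ring]
    exact neg_div_neg_eq _ _
  · have hEden : e den = -den := by
      rw [hden, map_sub, map_mul, map_mul, he, he]; ring
    rw [map_div₀, hEden, map_sub, map_mul, map_mul, he, he]
    rw [show f * e u - e f * u = -(e f * u - f * e u) by ring]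
    exact neg_div_neg_eq _ _
  · rw [mul_div_assoc', mul_div_assoc', ← add_div]
    rw [show u * (f * e v - e f * v) + v * (e f * u - f * e u) = f * den by rw [hden]; ring]
    exact mul_div_cancel_right₀ f hdet

lemma det_factor (e : L ≃ₐ[ℂ] L) (u w : L) :
    u * e (w * u) - (w * u) * e u = u * e u * (e w - w) := by
  rw [map_mul]; ring

end KleinD
namespace KleinD

open Polynomial

variable (q : ℂ[X])

/-- `a = q(x)/(1/2+x)`. -/
def aF : L := pol q / (cst (1/2) + xL)
/-- `b = q(x)/x`. -/
def bF : L := pol q / xL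
/-- the constant term of `φ(-v-w)`. -/
def cF : L := cst (q.eval (-(1/2 : ℂ))) / ((cst (1/2) + xL) * (cst (1/2) - xL))

lemma tauL_aF : tauL (aF q) = tauL (pol q) / (cst (1/2) - xL) := by
  rw [aF, map_div₀, map_add, tauL_cst, tauL_X, ← sub_eq_add_neg]

lemma tauL_bF : tauL (bF q) = -(tauL (pol q) / xL) := by
  rw [bF, map_div₀, tauL_X]
  exact div_neg (tauL (pol q))

lemma tauL_cF : tauL (cF q) = cF q := by
  rw [cF, map_div₀, map_mul, map_add, map_sub, tauL_cst, tauL_X, tauL_cst]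
  ring_nf

lemma phiMVW_eq : phiMVW q
    = (1/2 : ℂ) • (mulE (aF q) * Dj (-1) + mulE (tauL (aF q)) * Dj 1 - mulE (cF q)) := by
  rw [phiMVW, tauL_aF, Dj_one, Dj_neg_one, aF, cF]

lemma phiMHVW_eq : phiMHVW q
    = (1/2 : ℂ) • (mulE (bF q) * Dj (-1) + mulE (tauL (bF q)) * Dj 1) := by
  rw [phiMHVW, tauL_bF, Dj_one, Dj_neg_one, bF]
  congr 1
  rw [mulE_neg, neg_mul, ← sub_eq_add_neg]

variable {q} (hq : q ≠ 0)
include hq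

lemma aF_ne_zero : aF q ≠ 0 :=
  div_ne_zero (pol_ne_zero hq) (cst_add_xL_ne_zero (1/2))

lemma bF_ne_zero : bF q ≠ 0 := div_ne_zero (pol_ne_zero hq) xL_ne_zero

/-- `b/a = (1/2 + x)/x`. -/
lemma bF_div_aF : bF q / aF q = (cst (1/2) + xL) / xL := by
  rw [bF, aF]
  have h1 : pol q ≠ 0 := pol_ne_zero hq
  have h2 : xL ≠ 0 := xL_ne_zero
  have h3 : cst (1/2) + xL ≠ 0 := cst_add_xL_ne_zero (1/2)
  field_simp

end KleinD
namespace KleinD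

open Polynomial

lemma tauL_smul (c : ℂ) (z : L) : tauL (c • z) = c • tauL z := by
  simp only [Algebra.smul_def, map_mul]
  congr 1
  exact AlgEquiv.commutes tauL c

/-- The symmetric pair `f δ^{-n} + τ(f) δ^{n}`. -/
def Pr (f : L) (n : ℕ) : Module.End ℂ L :=
  mulE f * Dj (-(n : ℤ)) + mulE (tauL f) * Dj (n : ℤ)

lemma Pr_add (f g : L) (n : ℕ) : Pr f n + Pr g n = Pr (f + g) n := by
  rw [Pr, Pr, Pr, map_add, mulE_add, mulE_add, add_mul, add_mul]
  abel

lemma Pr_zero (n : ℕ) : Pr 0 n = 0 := by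
  rw [Pr, map_zero]
  have h : mulE (0 : L) = 0 := map_zero (Algebra.lmul ℂ L)
  rw [h, zero_mul, zero_mul, zero_add]

lemma Pr_smul (c : ℂ) (f : L) (n : ℕ) : Pr (c • f) n = c • Pr f n := by
  rw [Pr, Pr, tauL_smul, mulE_smul, mulE_smul, smul_mul_assoc, smul_mul_assoc, smul_add]

lemma conjE_Pr (f : L) (n : ℕ) : conjE (Pr f n) = Pr f n := by
  rw [Pr, conjE_add, conjE_gen, conjE_gen, tauL_invol, neg_neg]
  exact add_comm _ _

lemma mulE_Pr {g : L} (hg : tauL g = g) (u : L) (n : ℕ) :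
    mulE g * Pr u n = Pr (g * u) n := by
  rw [Pr, Pr, mul_add, ← mul_assoc, mulE_mul, ← mul_assoc, mulE_mul, map_mul, hg]

/-- The span of `mulE f * δ^j` over `j` satisfying `J`. -/
def MJ (J : ℤ → Prop) : Submodule ℂ (Module.End ℂ L) :=
  Submodule.span ℂ {Z | ∃ f : L, ∃ j : ℤ, J j ∧ Z = mulE f * Dj j}

abbrev Mk (k : ℕ) : Submodule ℂ (Module.End ℂ L) := MJ (fun j => j.natAbs ≤ k)
abbrev Minf : Submodule ℂ (Module.End ℂ L) := MJ (fun _ => True)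

lemma MJ_mono {J J' : ℤ → Prop} (h : ∀ j, J j → J' j) : MJ J ≤ MJ J' := by
  apply Submodule.span_mono
  rintro Z ⟨f, j, hj, rfl⟩
  exact ⟨f, j, h j hj, rfl⟩

lemma gen_mem {J : ℤ → Prop} (f : L) {j : ℤ} (hj : J j) : mulE f * Dj j ∈ MJ J :=
  Submodule.subset_span ⟨f, j, hj, rfl⟩

lemma Pr_mem_Mk (f : L) (n : ℕ) : Pr f n ∈ Mk n := by
  apply Submodule.add_mem
  · exact gen_mem _ (by simp)
  · exact gen_mem _ (by simp)

lemma MJ_mulE {J : ℤ → Prop} (g : L) {Y : Module.End ℂ L} (hY : Y ∈ MJ J) :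
    Y * mulE g ∈ MJ J := by
  induction hY using Submodule.span_induction with
  | mem Z hZ =>
    obtain ⟨f, j, hj, rfl⟩ := hZ
    rw [mul_assoc, Dj_mulE, ← mul_assoc, mulE_mul]
    exact gen_mem _ hj
  | zero => rw [zero_mul]; exact Submodule.zero_mem _
  | add a b _ _ ha hb => rw [add_mul]; exact Submodule.add_mem _ ha hb
  | smul c a _ ha => rw [smul_mul_assoc]; exact Submodule.smul_mem _ c ha

lemma mulE_MJ {J : ℤ → Prop} (g : L) {Y : Module.End ℂ L} (hY : Y ∈ MJ J) :
    mulE g * Y ∈ MJ J := by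
  induction hY using Submodule.span_induction with
  | mem Z hZ =>
    obtain ⟨f, j, hj, rfl⟩ := hZ
    rw [← mul_assoc, mulE_mul]
    exact gen_mem _ hj
  | zero => rw [mul_zero]; exact Submodule.zero_mem _
  | add a b _ _ ha hb => rw [mul_add]; exact Submodule.add_mem _ ha hb
  | smul c a _ ha => rw [mul_smul_comm]; exact Submodule.smul_mem _ c ha

lemma shift_Mk (f : L) (i : ℤ) {k : ℕ} {Y : Module.End ℂ L} (hY : Y ∈ Mk k) :
    (mulE f * Dj i) * Y ∈ Mk (k + i.natAbs) := by
  induction hY using Submodule.span_induction with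
  | mem Z hZ =>
    obtain ⟨g, j, hj, rfl⟩ := hZ
    rw [genMul]
    apply gen_mem
    have := Int.natAbs_add_le i j
    omega
  | zero => rw [mul_zero]; exact Submodule.zero_mem _
  | add a b _ _ ha hb => rw [mul_add]; exact Submodule.add_mem _ ha hb
  | smul c a _ ha => rw [mul_smul_comm]; exact Submodule.smul_mem _ c ha

lemma conjE_zero : conjE 0 = 0 := by
  unfold conjE; rw [mul_zero, zero_mul]

/-- Symmetrization: a `τ`-invariant element of `MJ J` lies in any submodule containing the
corresponding symmetric pairs. -/
lemma theta {J : ℤ → Prop} (hJ : ∀ j, J j → J (-j)) {S : Submodule ℂ (Module.End ℂ L)}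
    (hS : ∀ (f : L) (n : ℕ), J (n : ℤ) → Pr f n ∈ S) :
    ∀ Y ∈ MJ J, conjE Y = Y → Y ∈ S := by
  have key : ∀ Y ∈ MJ J, (1/2 : ℂ) • (Y + conjE Y) ∈ S := by
    intro Y hY
    induction hY using Submodule.span_induction with
    | mem Z hZ =>
      obtain ⟨f, j, hj, rfl⟩ := hZ
      rw [conjE_gen]
      obtain ⟨n, hj1 | hj1⟩ : ∃ n : ℕ, j = (n : ℤ) ∨ j = -(n : ℤ) :=
        ⟨j.natAbs, Int.natAbs_eq j⟩
      · have h2 : mulE f * Dj j + mulE (tauL f) * Dj (-j) = Pr (tauL f) n := by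
          rw [Pr, tauL_invol, hj1, add_comm]
        rw [h2]
        exact Submodule.smul_mem _ _ (hS _ _ (hj1 ▸ hj))
      · have h2 : mulE f * Dj j + mulE (tauL f) * Dj (-j) = Pr f n := by
          rw [Pr, hj1, neg_neg]
        rw [h2]
        have hJn : J (n : ℤ) := by
          have h3 := hJ j hj
          rw [hj1, neg_neg] at h3
          exact h3
        exact Submodule.smul_mem _ _ (hS _ _ hJn)
    | zero =>
      rw [conjE_zero, add_zero, smul_zero]
      exact Submodule.zero_mem _
    | add a b _ _ ha hb =>
      have : (1/2 : ℂ) • (a + b + conjE (a + b))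
          = (1/2 : ℂ) • (a + conjE a) + (1/2 : ℂ) • (b + conjE b) := by
        rw [conjE_add, ← smul_add]
        congr 1
        abel
      rw [this]
      exact Submodule.add_mem _ ha hb
    | smul c a _ ha =>
      have : (1/2 : ℂ) • (c • a + conjE (c • a)) = c • ((1/2 : ℂ) • (a + conjE a)) := by
        rw [conjE_smul, ← smul_add, smul_comm]
      rw [this]
      exact Submodule.smul_mem _ _ ha
  intro Y hY hconj
  have h := key Y hY
  rwa [hconj, show (1/2 : ℂ) • (Y + Y) = Y from by
    rw [← two_smul ℂ, smul_smul]; norm_num] at h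

end KleinD
namespace KleinD

open Polynomial

/-- `w = (1/2 + x)/x = b/a`. -/
def wbar : L := (cst (1/2) + xL) / xL

lemma cst_two : cst (2 : ℂ) = (2 : L) := map_ofNat (algebraMap ℂ L) 2

lemma two_ne_zero_L : (2 : L) ≠ 0 := by
  rw [← cst_two]
  exact cst_ne_zero (by norm_num)

lemma tauL_wbar_ne : tauL wbar ≠ wbar := by
  intro h
  rw [wbar, map_div₀, map_add, tauL_cst, tauL_X] at h
  rw [div_eq_div_iff (by rw [neg_ne_zero]; exact xL_ne_zero) xL_ne_zero] at h
  have key : cst (1/2) * (2 * xL) = 0 := by linear_combination h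
  rcases mul_eq_zero.mp key with h1 | h1
  · exact cst_ne_zero (by norm_num) h1
  · rcases mul_eq_zero.mp h1 with h2 | h2
    · exact two_ne_zero_L h2
    · exact xL_ne_zero h2

/-- The involution `g(x) ↦ g(-x-2k)`. -/
def iK (k : ℕ) : L ≃ₐ[ℂ] L := (deltaL ^ (k : ℤ))⁻¹ * tauL * deltaL ^ (k : ℤ)

lemma iK_apply (k : ℕ) (z : L) : iK k z = dj (-(k : ℤ)) (tauL (dj (k : ℤ) z)) := by
  have h : djA (-(k:ℤ)) = (deltaL ^ (k:ℤ))⁻¹ := by rw [djA, zpow_neg]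
  simp only [iK, AlgEquiv.mul_apply, dj, djA, h]
  rw [zpow_neg]

lemma iK_invol (k : ℕ) (z : L) : iK k (iK k z) = z := by
  have h : iK k * iK k = 1 := by
    unfold iK
    have h2 : (deltaL ^ (k : ℤ))⁻¹ * tauL * deltaL ^ (k : ℤ)
        * ((deltaL ^ (k : ℤ))⁻¹ * tauL * deltaL ^ (k : ℤ))
        = (deltaL ^ (k : ℤ))⁻¹ * (tauL * tauL) * deltaL ^ (k : ℤ) := by
      group
    rw [h2, tauL_mul_tauL, mul_one, inv_mul_cancel]
  calc iK k (iK k z) = (iK k * iK k) z := rfl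
    _ = z := by rw [h]; rfl

lemma iK_X (k : ℕ) : iK k xL = -xL - 2 * cst (k : ℂ) := by
  rw [iK_apply, dj_X, map_sub, tauL_X, tauL_cst, dj_map_sub, dj_cst]
  have h : dj (-(k:ℤ)) (-xL) = -(xL - cst ((-(k:ℤ) : ℤ) : ℂ)) := by
    rw [show -xL = (-1 : L) * xL by ring, dj_map_mul, dj_X]
    have : dj (-(k:ℤ)) (-1 : L) = -1 := by
      rw [show (-1 : L) = cst (-1) by rw [cst_neg, cst_one], dj_cst, cst_neg, cst_one]
    rw [this]; ring
  rw [h]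
  have : cst ((-(k:ℤ) : ℤ) : ℂ) = -cst ((k:ℤ) : ℂ) := by push_cast [cst_neg]; ring
  rw [this]
  push_cast
  ring

lemma iK_cst (k : ℕ) (c : ℂ) : iK k (cst c) = cst c := AlgEquiv.commutes (iK k) c

lemma iK_wbar_ne (k : ℕ) (hk : 1 ≤ k) : iK k wbar ≠ wbar := by
  intro h
  rw [wbar, map_div₀, map_add, iK_cst, iK_X] at h
  have hden : -xL - 2 * cst (k : ℂ) ≠ 0 := by
    intro h0
    apply xL_add_cst_ne_zero (2 * k)
    have : xL + cst (2 * (k:ℂ)) = -(-xL - 2 * cst (k:ℂ)) := by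
      have h2 : cst (2 * (k:ℂ)) = 2 * cst (k:ℂ) := by
        rw [show (2 * (k:ℂ)) = (2:ℂ) * k from rfl, cst, map_mul]
        congr 1
        exact cst_two
      rw [h2]; ring
    rw [this, h0, neg_zero]
  rw [div_eq_div_iff hden xL_ne_zero] at h
  have key : cst (1/2) * (2 * (xL + cst (k:ℂ))) = 0 := by linear_combination h
  rcases mul_eq_zero.mp key with h1 | h1
  · exact cst_ne_zero (by norm_num) h1
  · rcases mul_eq_zero.mp h1 with h2 | h2
    · exact two_ne_zero_L h2
    · exact xL_add_cst_ne_zero _ h2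

end KleinD
namespace KleinD

open Polynomial

/-- Top coefficient of `T^k`. -/
def uk (q : ℂ[X]) : ℕ → L
  | 0 => 1
  | k + 1 => (1/2 : ℂ) • (aF q * dj (-1) (uk q k))

/-- Top coefficient of `R T^{k-1}`. -/
def vk (q : ℂ[X]) (k : ℕ) : L := (bF q / aF q) * uk q k

lemma dj_ne_zero (j : ℤ) {z : L} (hz : z ≠ 0) : dj j z ≠ 0 := by
  intro h
  apply hz
  have := (djA j).injective (h.trans (map_zero (djA j)).symm)
  exact this

variable {q : ℂ[X]} (hq : q ≠ 0)
include hq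

lemma uk_ne_zero : ∀ k, uk q k ≠ 0 := by
  intro k
  induction k with
  | zero => rw [uk]; exact one_ne_zero
  | succ k ih =>
    rw [uk]
    apply smul_ne_zero (by norm_num)
    exact mul_ne_zero (aF_ne_zero hq) (dj_ne_zero _ ih)

lemma vk_succ (k : ℕ) : vk q (k + 1) = (1/2 : ℂ) • (bF q * dj (-1) (uk q k)) := by
  rw [vk, uk, mul_smul_comm]
  congr 1
  have ha : aF q ≠ 0 := aF_ne_zero hq
  field_simp

omit hq

lemma genMulPr (f : L) (i : ℤ) (u : L) (n : ℕ) :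
    (mulE f * Dj i) * Pr u n
      = mulE (f * dj i u) * Dj (i - (n : ℤ)) + mulE (f * dj i (tauL u)) * Dj (i + (n : ℤ)) := by
  rw [Pr, mul_add, genMul, genMul, sub_eq_add_neg]

lemma mulEPr (g u : L) (n : ℕ) :
    mulE g * Pr u n = mulE (g * u) * Dj (-(n : ℤ)) + mulE (g * tauL u) * Dj (n : ℤ) := by
  rw [Pr, mul_add, ← mul_assoc, mulE_mul, ← mul_assoc, mulE_mul]

lemma shift_Mk' (f : L) (i : ℤ) (hi : i.natAbs ≤ 1) {k : ℕ} {Y : Module.End ℂ L}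
    (hY : Y ∈ Mk k) : (mulE f * Dj i) * Y ∈ Mk (k + 1) := by
  have h := shift_Mk f i hY
  exact MJ_mono (fun j hj => by omega) h

lemma T_Mk (k : ℕ) {Y : Module.End ℂ L} (hY : Y ∈ Mk k) : phiMVW q * Y ∈ Mk (k + 1) := by
  rw [phiMVW_eq, smul_mul_assoc, sub_mul, add_mul]
  apply Submodule.smul_mem
  apply Submodule.sub_mem
  · apply Submodule.add_mem
    · exact shift_Mk' _ (-1) (by norm_num) hY
    · exact shift_Mk' _ 1 (by norm_num) hY
  · have h : mulE (cF q) * Y = (mulE (cF q) * Dj 0) * Y := by rw [Dj_zero, mul_one]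
    rw [h]
    exact shift_Mk' _ 0 (by norm_num) hY

lemma R_Mk (k : ℕ) {Y : Module.End ℂ L} (hY : Y ∈ Mk k) : phiMHVW q * Y ∈ Mk (k + 1) := by
  rw [phiMHVW_eq, smul_mul_assoc, add_mul]
  apply Submodule.smul_mem
  apply Submodule.add_mem
  · exact shift_Mk' _ (-1) (by norm_num) hY
  · exact shift_Mk' _ 1 (by norm_num) hY

end KleinD
namespace KleinD

open Polynomial

variable {q : ℂ[X]} (hq : q ≠ 0)

lemma natAbs_le_succ (k : ℕ) : ((k:ℤ)).natAbs ≤ k + 1 := by omega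
lemma natAbs_neg_le_succ (k : ℕ) : (-(k:ℤ)).natAbs ≤ k + 1 := by omega

lemma repT : ∀ k : ℕ, phiMVW q ^ (k+1) - Pr (uk q (k+1)) (k+1) ∈ Mk k := by
  intro k
  induction k with
  | zero =>
    have h1 : uk q 1 = (1/2:ℂ) • aF q := by
      rw [uk, uk, dj_map_one, mul_one]
    have h2 : Pr (uk q 1) 1
        = (1/2:ℂ) • (mulE (aF q) * Dj (-1) + mulE (tauL (aF q)) * Dj 1) := by
      rw [h1, Pr_smul, Pr]
      norm_num
    have h3 : phiMVW q ^ 1 - Pr (uk q 1) 1 = -((1/2:ℂ) • mulE (cF q)) := by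
      rw [pow_one, h2, phiMVW_eq]
      module
    rw [h3]
    apply Submodule.neg_mem
    apply Submodule.smul_mem
    have h4 : mulE (cF q) = mulE (cF q) * Dj 0 := by rw [Dj_zero, mul_one]
    rw [h4]
    exact gen_mem _ (by omega)
  | succ k ih =>
    set u := uk q (k+1) with hu
    have hτ : tauL (aF q * dj (-1) u) = tauL (aF q) * dj 1 (tauL u) := by
      rw [map_mul, tauL_dj]; norm_num
    have hTP : phiMVW q * Pr u (k+1) = (1/2:ℂ) • (
        (mulE (aF q * dj (-1) u) * Dj ((-1 : ℤ) - ((k+1:ℕ):ℤ))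
          + mulE (aF q * dj (-1) (tauL u)) * Dj ((-1:ℤ) + ((k+1:ℕ):ℤ)))
        + (mulE (tauL (aF q) * dj 1 u) * Dj ((1:ℤ) - ((k+1:ℕ):ℤ))
          + mulE (tauL (aF q) * dj 1 (tauL u)) * Dj ((1:ℤ) + ((k+1:ℕ):ℤ)))
        - (mulE (cF q * u) * Dj (-((k+1:ℕ):ℤ)) + mulE (cF q * tauL u) * Dj ((k+1:ℕ):ℤ))) := by
      rw [phiMVW_eq, smul_mul_assoc, sub_mul, add_mul, genMulPr, genMulPr, mulEPr]
    have hPrNew : Pr (uk q (k+2)) (k+2) = (1/2:ℂ) •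
        (mulE (aF q * dj (-1) u) * Dj (-((k+2:ℕ):ℤ))
          + mulE (tauL (aF q) * dj 1 (tauL u)) * Dj ((k+2:ℕ):ℤ)) := by
      rw [show uk q (k+2) = (1/2:ℂ) • (aF q * dj (-1) u) from by rw [uk], Pr_smul, Pr, hτ,
        smul_add]
    have e1 : (-1 : ℤ) - ((k+1:ℕ):ℤ) = -((k+2:ℕ):ℤ) := by push_cast; ring
    have e2 : (1 : ℤ) + ((k+1:ℕ):ℤ) = ((k+2:ℕ):ℤ) := by push_cast; ring
    have e3 : (-1 : ℤ) + ((k+1:ℕ):ℤ) = (k : ℤ) := by push_cast; ring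
    have e4 : (1 : ℤ) - ((k+1:ℕ):ℤ) = -(k : ℤ) := by push_cast; ring
    have key : phiMVW q ^ (k+2) - Pr (uk q (k+2)) (k+2)
        = phiMVW q * (phiMVW q ^ (k+1) - Pr u (k+1))
        + (1/2:ℂ) • (mulE (aF q * dj (-1) (tauL u)) * Dj ((k:ℤ))
             + mulE (tauL (aF q) * dj 1 u) * Dj (-(k:ℤ))
             - mulE (cF q * u) * Dj (-((k+1:ℕ):ℤ))
             - mulE (cF q * tauL u) * Dj ((k+1:ℕ):ℤ)) := by
      rw [pow_succ' (phiMVW q) (k+1), mul_sub]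
      rw [hTP, hPrNew, e1, e2, e3, e4]
      module
    rw [key]
    apply Submodule.add_mem
    · exact T_Mk (k := k) ih
    · apply Submodule.smul_mem
      apply Submodule.sub_mem
      apply Submodule.sub_mem
      apply Submodule.add_mem
      · exact gen_mem _ (by omega)
      · exact gen_mem _ (by omega)
      · exact gen_mem _ (by omega)
      · exact gen_mem _ (by omega)

include hq

lemma repR : ∀ k : ℕ, phiMHVW q * phiMVW q ^ k - Pr (vk q (k+1)) (k+1) ∈ Mk k := by
  intro k
  cases k with
  | zero =>
    have h1 : vk q 1 = (1/2:ℂ) • bF q := by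
      rw [(vk_succ hq 0 : vk q 1 = _), uk, dj_map_one, mul_one]
    have h2 : Pr (vk q 1) 1
        = (1/2:ℂ) • (mulE (bF q) * Dj (-1) + mulE (tauL (bF q)) * Dj 1) := by
      rw [h1, Pr_smul, Pr]
      norm_num
    have h3 : phiMHVW q * phiMVW q ^ 0 - Pr (vk q 1) 1 = 0 := by
      rw [pow_zero, mul_one, h2, phiMHVW_eq, sub_self]
    rw [h3]
    exact Submodule.zero_mem _
  | succ k =>
    set u := uk q (k+1) with hu
    have hτ : tauL (bF q * dj (-1) u) = tauL (bF q) * dj 1 (tauL u) := by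
      rw [map_mul, tauL_dj]; norm_num
    have hRP : phiMHVW q * Pr u (k+1) = (1/2:ℂ) • (
        (mulE (bF q * dj (-1) u) * Dj ((-1 : ℤ) - ((k+1:ℕ):ℤ))
          + mulE (bF q * dj (-1) (tauL u)) * Dj ((-1:ℤ) + ((k+1:ℕ):ℤ)))
        + (mulE (tauL (bF q) * dj 1 u) * Dj ((1:ℤ) - ((k+1:ℕ):ℤ))
          + mulE (tauL (bF q) * dj 1 (tauL u)) * Dj ((1:ℤ) + ((k+1:ℕ):ℤ)))) := by
      rw [phiMHVW_eq, smul_mul_assoc, add_mul, genMulPr, genMulPr]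
    have hPrNew : Pr (vk q (k+2)) (k+2) = (1/2:ℂ) •
        (mulE (bF q * dj (-1) u) * Dj (-((k+2:ℕ):ℤ))
          + mulE (tauL (bF q) * dj 1 (tauL u)) * Dj ((k+2:ℕ):ℤ)) := by
      rw [vk_succ hq (k+1), Pr_smul, Pr, hτ, smul_add]
    have e1 : (-1 : ℤ) - ((k+1:ℕ):ℤ) = -((k+2:ℕ):ℤ) := by push_cast; ring
    have e2 : (1 : ℤ) + ((k+1:ℕ):ℤ) = ((k+2:ℕ):ℤ) := by push_cast; ring
    have e3 : (-1 : ℤ) + ((k+1:ℕ):ℤ) = (k : ℤ) := by push_cast; ring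
    have e4 : (1 : ℤ) - ((k+1:ℕ):ℤ) = -(k : ℤ) := by push_cast; ring
    have key : phiMHVW q * phiMVW q ^ (k+1) - Pr (vk q (k+2)) (k+2)
        = phiMHVW q * (phiMVW q ^ (k+1) - Pr u (k+1))
        + (1/2:ℂ) • (mulE (bF q * dj (-1) (tauL u)) * Dj ((k:ℤ))
             + mulE (tauL (bF q) * dj 1 u) * Dj (-(k:ℤ))) := by
      rw [mul_sub, hRP, hPrNew, e1, e2, e3, e4]
      module
    rw [key]
    apply Submodule.add_mem
    · exact R_Mk (k := k) (repT k)
    · apply Submodule.smul_mem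
      apply Submodule.add_mem
      · exact gen_mem _ (by omega)
      · exact gen_mem _ (by omega)

end KleinD
namespace KleinD

open Polynomial

variable {q : ℂ[X]}

lemma conjE_mulE (f : L) : conjE (mulE f) = mulE (tauL f) := tauE_mulE f

lemma conjT : conjE (phiMVW q) = phiMVW q := by
  rw [phiMVW_eq, conjE_smul, conjE_sub, conjE_add, conjE_gen, conjE_gen, conjE_mulE,
    tauL_invol, tauL_cF]
  congr 1
  rw [neg_neg]
  abel

lemma conjR : conjE (phiMHVW q) = phiMHVW q := by
  rw [phiMHVW_eq, conjE_smul, conjE_add, conjE_gen, conjE_gen, tauL_invol]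
  congr 1
  rw [neg_neg]
  abel

lemma even_dj {k : ℕ} {g : L} (hg : iK k g = g) :
    tauL (dj (k : ℤ) g) = dj (k : ℤ) g := by
  have h1 : dj (k:ℤ) (iK k g) = dj (k:ℤ) g := by rw [hg]
  rw [iK_apply, dj_dj] at h1
  rw [show (k:ℤ) + -(k:ℤ) = 0 from by ring, dj_zero] at h1
  exact h1

lemma tauL_of_iK_fixed {k : ℕ} {g : L} (hg : iK k g = g) :
    tauL g = dj ((k:ℤ) + (k:ℤ)) g := by
  have h1 : tauL (dj (k:ℤ) g) = dj (k:ℤ) g := even_dj hg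
  have h2 : g = dj (-(k:ℤ)) (dj (k:ℤ) g) := by
    rw [dj_dj, show -(k:ℤ) + (k:ℤ) = 0 from by ring, dj_zero]
  calc tauL g = tauL (dj (-(k:ℤ)) (dj (k:ℤ) g)) := by rw [← h2]
    _ = dj (k:ℤ) (tauL (dj (k:ℤ) g)) := by rw [tauL_dj, neg_neg]
    _ = dj (k:ℤ) (dj (k:ℤ) g) := by rw [h1]
    _ = dj ((k:ℤ) + (k:ℤ)) g := by rw [dj_dj]

lemma Pr_mulE_iK {k : ℕ} {g : L} (hg : iK k g = g) (u : L) :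
    Pr u k * mulE (dj (k:ℤ) g) = Pr (u * g) k := by
  rw [Pr, Pr, add_mul, mul_assoc, Dj_mulE, mul_assoc, Dj_mulE, ← mul_assoc (mulE u),
    mulE_mul, ← mul_assoc (mulE (tauL u)), mulE_mul, dj_dj, dj_dj]
  rw [show -(k:ℤ) + (k:ℤ) = 0 from by ring, dj_zero]
  rw [map_mul]
  rw [← tauL_of_iK_fixed hg]

variable (hq : q ≠ 0)
include hq

lemma mainL (S : Submodule ℂ (Module.End ℂ L))
    (h1 : ∀ g : L, tauL g = g → ∀ n : ℕ, mulE g * phiMVW q ^ n ∈ S)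
    (h2 : ∀ g : L, tauL g = g → ∀ n : ℕ, mulE g * (phiMHVW q * phiMVW q ^ n) ∈ S) :
    ∀ (k : ℕ) (f : L), Pr f k ∈ S := by
  intro k
  induction k using Nat.strong_induction_on with
  | _ k IH =>
    intro f
    match k, IH with
    | 0, _ =>
      have heven : tauL (f + tauL f) = f + tauL f := by
        rw [map_add, tauL_invol, add_comm]
      have h0 : Pr f 0 = mulE (f + tauL f) * phiMVW q ^ 0 := by
        rw [pow_zero, mul_one, Pr, mulE_add]
        norm_num [Dj_zero]
      rw [h0]
      exact h1 _ heven 0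
    | (k0+1), IH =>
      set u := uk q (k0+1) with hu
      set v := vk q (k0+1) with hv
      have hvu : v = wbar * u := by
        rw [hv, vk, bF_div_aF hq, wbar]
      have hdet : u * tauL v - v * tauL u ≠ 0 := by
        rw [hvu, det_factor]
        exact mul_ne_zero
          (mul_ne_zero (uk_ne_zero hq _) (fun h0 => (uk_ne_zero hq (k0+1))
            (show u = 0 by rw [← tauL_invol u, h0, map_zero])))
          (sub_ne_zero.mpr tauL_wbar_ne)
      obtain ⟨g, h, hg, hh, hsum⟩ := solve tauL tauL_invol u v f hdet
      set Z := mulE g * phiMVW q ^ (k0+1) + mulE h * (phiMHVW q * phiMVW q ^ k0) with hZ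
      have hZS : Z ∈ S := Submodule.add_mem _ (h1 g hg (k0+1)) (h2 h hh k0)
      have hPrf : Pr f (k0+1) = Pr (g * u) (k0+1) + Pr (h * v) (k0+1) := by
        rw [Pr_add]
        congr 1
        linear_combination -hsum
      have hZrep : Z - Pr f (k0+1) ∈ Mk k0 := by
        have e : Z - Pr f (k0+1)
            = mulE g * (phiMVW q ^ (k0+1) - Pr u (k0+1))
              + mulE h * (phiMHVW q * phiMVW q ^ k0 - Pr v (k0+1)) := by
          rw [mul_sub, mul_sub, mulE_Pr hg, mulE_Pr hh, hPrf, hZ]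
          abel
        rw [e]
        exact Submodule.add_mem _ (mulE_MJ g (repT k0)) (mulE_MJ h (repR hq k0))
      have hZinv : conjE Z = Z := by
        rw [hZ, conjE_add, conjE_mul, conjE_mul, conjE_mul, conjE_pow, conjE_pow,
          conjT, conjR, conjE_mulE, conjE_mulE, hg, hh]
      have hRm : Z - Pr f (k0+1) ∈ S := by
        apply theta (J := fun j => j.natAbs ≤ k0) (fun j hj => by omega)
          (fun f' n hn => IH n (by omega) f') _ hZrep
        rw [conjE_sub, hZinv, conjE_Pr]
      have := Submodule.sub_mem S hZS hRm
      rwa [sub_sub_cancel] at this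

lemma mainR (S : Submodule ℂ (Module.End ℂ L))
    (h1 : ∀ g : L, tauL g = g → ∀ n : ℕ, phiMVW q ^ n * mulE g ∈ S)
    (h2 : ∀ g : L, tauL g = g → ∀ n : ℕ, (phiMHVW q * phiMVW q ^ n) * mulE g ∈ S) :
    ∀ (k : ℕ) (f : L), Pr f k ∈ S := by
  intro k
  induction k using Nat.strong_induction_on with
  | _ k IH =>
    intro f
    match k, IH with
    | 0, _ =>
      have heven : tauL (f + tauL f) = f + tauL f := by
        rw [map_add, tauL_invol, add_comm]
      have h0 : Pr f 0 = phiMVW q ^ 0 * mulE (f + tauL f) := by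
        rw [pow_zero, one_mul, Pr, mulE_add]
        norm_num [Dj_zero]
      rw [h0]
      exact h1 _ heven 0
    | (k0+1), IH =>
      set u := uk q (k0+1) with hu
      set v := vk q (k0+1) with hv
      have hvu : v = wbar * u := by
        rw [hv, vk, bF_div_aF hq, wbar]
      have hdet : u * (iK (k0+1)) v - v * (iK (k0+1)) u ≠ 0 := by
        rw [hvu, det_factor]
        exact mul_ne_zero
          (mul_ne_zero (uk_ne_zero hq _) (fun h0 => (uk_ne_zero hq (k0+1))
            (show u = 0 by rw [← iK_invol (k0+1) u, h0, map_zero])))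
          (sub_ne_zero.mpr (iK_wbar_ne (k0+1) (by omega)))
      obtain ⟨g, h, hg, hh, hsum⟩ := solve (iK (k0+1)) (iK_invol (k0+1)) u v f hdet
      have hg' : tauL (dj ((k0+1:ℕ):ℤ) g) = dj ((k0+1:ℕ):ℤ) g := even_dj hg
      have hh' : tauL (dj ((k0+1:ℕ):ℤ) h) = dj ((k0+1:ℕ):ℤ) h := even_dj hh
      set Z := phiMVW q ^ (k0+1) * mulE (dj ((k0+1:ℕ):ℤ) g)
        + (phiMHVW q * phiMVW q ^ k0) * mulE (dj ((k0+1:ℕ):ℤ) h) with hZ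
      have hZS : Z ∈ S := Submodule.add_mem _ (h1 _ hg' (k0+1)) (h2 _ hh' k0)
      have hPrf : Pr f (k0+1) = Pr (u * g) (k0+1) + Pr (v * h) (k0+1) := by
        rw [Pr_add]
        congr 1
        linear_combination -hsum
      have hZrep : Z - Pr f (k0+1) ∈ Mk k0 := by
        have e : Z - Pr f (k0+1)
            = (phiMVW q ^ (k0+1) - Pr u (k0+1)) * mulE (dj ((k0+1:ℕ):ℤ) g)
              + (phiMHVW q * phiMVW q ^ k0 - Pr v (k0+1)) * mulE (dj ((k0+1:ℕ):ℤ) h) := by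
          rw [sub_mul, sub_mul, Pr_mulE_iK hg, Pr_mulE_iK hh, hPrf, hZ]
          abel
        rw [e]
        exact Submodule.add_mem _ (MJ_mulE _ (repT k0)) (MJ_mulE _ (repR hq k0))
      have hZinv : conjE Z = Z := by
        rw [hZ, conjE_add, conjE_mul, conjE_mul, conjE_mul, conjE_pow, conjE_pow,
          conjT, conjR, conjE_mulE, conjE_mulE, hg', hh']
      have hRm : Z - Pr f (k0+1) ∈ S := by
        apply theta (J := fun j => j.natAbs ≤ k0) (fun j hj => by omega)
          (fun f' n hn => IH n (by omega) f') _ hZrep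
        rw [conjE_sub, hZinv, conjE_Pr]
      have := Submodule.sub_mem S hZS hRm
      rwa [sub_sub_cancel] at this

end KleinD
namespace KleinD

open Polynomial

lemma genMul_Minf (f : L) (j : ℤ) {Y : Module.End ℂ L} (hY : Y ∈ Minf) :
    (mulE f * Dj j) * Y ∈ Minf := by
  induction hY using Submodule.span_induction with
  | mem Z hZ =>
    obtain ⟨g, l, -, rfl⟩ := hZ
    rw [genMul]
    exact gen_mem _ trivial
  | zero => rw [mul_zero]; exact Submodule.zero_mem _
  | add a b _ _ ha hb => rw [mul_add]; exact Submodule.add_mem _ ha hb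
  | smul c a _ ha => rw [mul_smul_comm]; exact Submodule.smul_mem _ c ha

lemma Minf_mul {X Y : Module.End ℂ L} (hX : X ∈ Minf) (hY : Y ∈ Minf) : X * Y ∈ Minf := by
  induction hX using Submodule.span_induction with
  | mem Z hZ =>
    obtain ⟨f, j, -, rfl⟩ := hZ
    exact genMul_Minf f j hY
  | zero => rw [zero_mul]; exact Submodule.zero_mem _
  | add a b _ _ ha hb => rw [add_mul]; exact Submodule.add_mem _ ha hb
  | smul c a _ ha => rw [smul_mul_assoc]; exact Submodule.smul_mem _ c ha

lemma one_mem_Minf : (1 : Module.End ℂ L) ∈ Minf := by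
  have h : (1 : Module.End ℂ L) = mulE 1 * Dj 0 := by rw [mulE_one, Dj_zero, one_mul]
  rw [h]
  exact gen_mem _ trivial

/-- `Minf` as a subalgebra. -/
def MinfAlg : Subalgebra ℂ (Module.End ℂ L) :=
  Submodule.toSubalgebra Minf one_mem_Minf (fun _ _ => Minf_mul)

lemma CxZ_le_Minf {Y : Module.End ℂ L} (hY : Y ∈ CxZ) : Y ∈ Minf := by
  have h : CxZ ≤ MinfAlg := by
    apply Algebra.adjoin_le
    rintro Z (⟨f, rfl⟩ | hZ)
    · show mulE f ∈ Minf
      have : mulE f = mulE f * Dj 0 := by rw [Dj_zero, mul_one]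
      rw [this]; exact gen_mem _ trivial
    · rcases hZ with rfl | rfl
      · show deltaE ∈ Minf
        rw [← Dj_one, show Dj 1 = mulE 1 * Dj 1 from by rw [mulE_one, one_mul]]
        exact gen_mem _ trivial
      · show deltaInvE ∈ Minf
        rw [← Dj_neg_one, show Dj (-1) = mulE 1 * Dj (-1) from by rw [mulE_one, one_mul]]
        exact gen_mem _ trivial
  exact h hY

lemma mulE_mem_CxZ (f : L) : mulE f ∈ CxZ :=
  Algebra.subset_adjoin (Or.inl ⟨f, rfl⟩)

lemma deltaE_mem_CxZ : deltaE ∈ CxZ := Algebra.subset_adjoin (Or.inr (by left; rfl))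
lemma deltaInvE_mem_CxZ : deltaInvE ∈ CxZ := Algebra.subset_adjoin (Or.inr (by right; rfl))

lemma phiMVW_mem_CxZ (q : ℂ[X]) : phiMVW q ∈ CxZ := by
  rw [phiMVW]
  apply Subalgebra.smul_mem
  apply Subalgebra.sub_mem
  apply Subalgebra.add_mem
  · exact Subalgebra.mul_mem _ (mulE_mem_CxZ _) deltaInvE_mem_CxZ
  · exact Subalgebra.mul_mem _ (mulE_mem_CxZ _) deltaE_mem_CxZ
  · exact mulE_mem_CxZ _

lemma phiMHVW_mem_CxZ (q : ℂ[X]) : phiMHVW q ∈ CxZ := by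
  rw [phiMHVW]
  apply Subalgebra.smul_mem
  apply Subalgebra.sub_mem
  · exact Subalgebra.mul_mem _ (mulE_mem_CxZ _) deltaInvE_mem_CxZ
  · exact Subalgebra.mul_mem _ (mulE_mem_CxZ _) deltaE_mem_CxZ

lemma mem_CxZS2_iff (Y : Module.End ℂ L) : Y ∈ CxZS2 ↔ Y ∈ CxZ ∧ conjE Y = Y := Iff.rfl

lemma CxZS2_mul {X Y : Module.End ℂ L} (hX : X ∈ CxZS2) (hY : Y ∈ CxZS2) : X * Y ∈ CxZS2 :=
  ⟨Subalgebra.mul_mem _ hX.1 hY.1, by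
    show conjE (X * Y) = X * Y
    rw [conjE_mul]
    have eX : conjE X = X := hX.2
    have eY : conjE Y = Y := hY.2
    rw [eX, eY]⟩

lemma CxZS2_add {X Y : Module.End ℂ L} (hX : X ∈ CxZS2) (hY : Y ∈ CxZS2) : X + Y ∈ CxZS2 :=
  ⟨Subalgebra.add_mem _ hX.1 hY.1, by
    show conjE (X + Y) = X + Y
    rw [conjE_add]
    have eX : conjE X = X := hX.2
    have eY : conjE Y = Y := hY.2
    rw [eX, eY]⟩

lemma CxZS2_smul (c : ℂ) {Y : Module.End ℂ L} (hY : Y ∈ CxZS2) : c • Y ∈ CxZS2 :=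
  ⟨Subalgebra.smul_mem _ hY.1 c, by
    show conjE (c • Y) = c • Y
    rw [conjE_smul]
    have eY : conjE Y = Y := hY.2
    rw [eY]⟩

lemma CxZS2_zero : (0 : Module.End ℂ L) ∈ CxZS2 :=
  ⟨Subalgebra.zero_mem _, by show conjE 0 = 0; exact conjE_zero⟩

lemma CxZS2_sub {X Y : Module.End ℂ L} (hX : X ∈ CxZS2) (hY : Y ∈ CxZS2) : X - Y ∈ CxZS2 :=
  ⟨Subalgebra.sub_mem _ hX.1 hY.1, by
    show conjE (X - Y) = X - Y
    rw [conjE_sub]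
    have eX : conjE X = X := hX.2
    have eY : conjE Y = Y := hY.2
    rw [eX, eY]⟩

lemma CxZS2_algebraMap (c : ℂ) : (algebraMap ℂ (Module.End ℂ L)) c ∈ CxZS2 := by
  refine ⟨Subalgebra.algebraMap_mem _ c, ?_⟩
  show conjE (algebraMap ℂ (Module.End ℂ L) c) = _
  rw [Algebra.algebraMap_eq_smul_one, conjE_smul]
  congr 1
  show tauE * 1 * tauE = 1
  rw [mul_one, tauE_tauE]

lemma phiU_mem_CxZS2 : phiU ∈ CxZS2 := by
  refine ⟨mulE_mem_CxZ _, ?_⟩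
  show conjE (mulE (xL ^ 2)) = mulE (xL ^ 2)
  rw [conjE_mulE, map_pow, tauL_X, neg_sq]

lemma phiMVW_mem_CxZS2 (q : ℂ[X]) : phiMVW q ∈ CxZS2 := ⟨phiMVW_mem_CxZ q, conjT⟩
lemma phiMHVW_mem_CxZS2 (q : ℂ[X]) : phiMHVW q ∈ CxZS2 := ⟨phiMHVW_mem_CxZ q, conjR⟩

lemma mulE_even_mem_CxZS2 {g : L} (hg : tauL g = g) : mulE g ∈ CxZS2 :=
  ⟨mulE_mem_CxZ g, by show conjE (mulE g) = mulE g; rw [conjE_mulE, hg]⟩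

end KleinD
namespace KleinD

lemma CxZS2_neg {Y : Module.End ℂ L} (hY : Y ∈ CxZS2) : -Y ∈ CxZS2 := by
  rw [← neg_one_smul ℂ]
  exact CxZS2_smul _ hY

end KleinD

open KleinD in
/-- `ℂ(x²)·φ(D(q)) = (ℂ(x)#ℤ)^{S₂} = φ(D(q))·ℂ(x²)`, where the left- and
right-hand sides are the sets of finite sums `Σ gᵢ(x²)·φ(dᵢ)` resp. `Σ φ(dᵢ)·gᵢ(x²)` with
`gᵢ(x²)` a `τ`-invariant rational function and `dᵢ ∈ D(q)`; i.e. `D(q)` is a Galois ring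
with respect to `ℂ[u]`. -/
theorem statement1 (q p₀ p₁ : Polynomial ℂ) (hq : 4 ≤ q.natDegree)
    (hp : pCond q p₀ p₁)
    (φ : Dq q p₀ p₁ →ₐ[ℂ] Module.End ℂ L)
    (hinj : Function.Injective φ)
    (hu : φ (uD q p₀ p₁) = phiU)
    (hvw : φ (-vD q p₀ p₁ - wD q p₀ p₁) = phiMVW q)
    (hhvw : φ (-(1/2 : ℂ) • vD q p₀ p₁ - wD q p₀ p₁) = phiMHVW q) :
    (Submodule.span ℂ {Y : Module.End ℂ L |
        ∃ g : L, tauL g = g ∧ ∃ d : Dq q p₀ p₁, Y = mulE g * φ d} : Set (Module.End ℂ L))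
      = CxZS2
    ∧ (Submodule.span ℂ {Y : Module.End ℂ L |
        ∃ g : L, tauL g = g ∧ ∃ d : Dq q p₀ p₁, Y = φ d * mulE g} : Set (Module.End ℂ L))
      = CxZS2 := by
  have hq0 : q ≠ 0 := by
    intro h
    rw [h] at hq
    simp at hq
  have hvD : φ (vD q p₀ p₁) = (2:ℂ) • (phiMHVW q - phiMVW q) := by
    have e : vD q p₀ p₁ = (2:ℂ) • ((-(1/2:ℂ) • vD q p₀ p₁ - wD q p₀ p₁)
        - (-vD q p₀ p₁ - wD q p₀ p₁)) := by module
    rw [e, map_smul, map_sub, hvw, hhvw]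
  have hφ : ∀ d : Dq q p₀ p₁, φ d ∈ CxZS2 := by
    intro d
    obtain ⟨x, rfl⟩ := RingQuot.mkAlgHom_surjective ℂ (DqRel q p₀ p₁) d
    induction x using FreeAlgebra.induction with
    | grade0 c =>
      have e1 : (RingQuot.mkAlgHom ℂ (DqRel q p₀ p₁)) (algebraMap ℂ _ c)
          = algebraMap ℂ _ c := AlgHom.commutes _ c
      rw [e1, AlgHom.commutes]
      exact CxZS2_algebraMap c
    | grade1 i =>
      fin_cases i
      · show φ (uD q p₀ p₁) ∈ CxZS2
        rw [hu]
        exact phiU_mem_CxZS2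
      · show φ (vD q p₀ p₁) ∈ CxZS2
        rw [hvD]
        exact CxZS2_smul _ (CxZS2_sub (phiMHVW_mem_CxZS2 q) (phiMVW_mem_CxZS2 q))
      · show φ (wD q p₀ p₁) ∈ CxZS2
        have e2 : wD q p₀ p₁ = -(-vD q p₀ p₁ - wD q p₀ p₁) - vD q p₀ p₁ := by module
        rw [e2, map_sub, map_neg, hvw, hvD]
        exact CxZS2_sub (CxZS2_neg (phiMVW_mem_CxZS2 q))
          (CxZS2_smul _ (CxZS2_sub (phiMHVW_mem_CxZS2 q) (phiMVW_mem_CxZS2 q)))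
    | mul a b ha hb =>
      rw [map_mul, map_mul]
      exact CxZS2_mul ha hb
    | add a b ha hb =>
      rw [map_add, map_add]
      exact CxZS2_add ha hb
  constructor
  · apply Set.Subset.antisymm
    · intro Y hY
      rw [SetLike.mem_coe] at hY
      induction hY using Submodule.span_induction with
      | mem Z hZ =>
        obtain ⟨g, hg, d, rfl⟩ := hZ
        exact CxZS2_mul (mulE_even_mem_CxZS2 hg) (hφ d)
      | zero => exact CxZS2_zero
      | add a b _ _ ha hb => exact CxZS2_add ha hb
      | smul c a _ ha => exact CxZS2_smul c ha
    · rintro Y ⟨hY1, hY2⟩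
      rw [SetLike.mem_coe]
      have hPrSL : ∀ (f : L) (n : ℕ), Pr f n ∈ Submodule.span ℂ {Y : Module.End ℂ L |
          ∃ g : L, tauL g = g ∧ ∃ d : Dq q p₀ p₁, Y = mulE g * φ d} := by
        intro f n
        apply mainL hq0 _ ?h1 ?h2 n f
        case h1 =>
          intro g hg m
          apply Submodule.subset_span
          refine ⟨g, hg, (-vD q p₀ p₁ - wD q p₀ p₁) ^ m, ?_⟩
          rw [map_pow, hvw]
        case h2 =>
          intro g hg m
          apply Submodule.subset_span
          refine ⟨g, hg, (-(1/2:ℂ) • vD q p₀ p₁ - wD q p₀ p₁)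
            * (-vD q p₀ p₁ - wD q p₀ p₁) ^ m, ?_⟩
          rw [map_mul, map_pow, hvw, hhvw]
      exact theta (J := fun _ => True) (fun j _ => trivial)
        (fun f n _ => hPrSL f n) Y (CxZ_le_Minf hY1) hY2
  · apply Set.Subset.antisymm
    · intro Y hY
      rw [SetLike.mem_coe] at hY
      induction hY using Submodule.span_induction with
      | mem Z hZ =>
        obtain ⟨g, hg, d, rfl⟩ := hZ
        exact CxZS2_mul (hφ d) (mulE_even_mem_CxZS2 hg)
      | zero => exact CxZS2_zero
      | add a b _ _ ha hb => exact CxZS2_add ha hb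
      | smul c a _ ha => exact CxZS2_smul c ha
    · rintro Y ⟨hY1, hY2⟩
      rw [SetLike.mem_coe]
      have hPrSR : ∀ (f : L) (n : ℕ), Pr f n ∈ Submodule.span ℂ {Y : Module.End ℂ L |
          ∃ g : L, tauL g = g ∧ ∃ d : Dq q p₀ p₁, Y = φ d * mulE g} := by
        intro f n
        apply mainR hq0 _ ?h1 ?h2 n f
        case h1 =>
          intro g hg m
          apply Submodule.subset_span
          refine ⟨g, hg, (-vD q p₀ p₁ - wD q p₀ p₁) ^ m, ?_⟩
          rw [map_pow, hvw]
        case h2 =>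
          intro g hg m
          apply Submodule.subset_span
          refine ⟨g, hg, (-(1/2:ℂ) • vD q p₀ p₁ - wD q p₀ p₁)
            * (-vD q p₀ p₁ - wD q p₀ p₁) ^ m, ?_⟩
          rw [map_mul, map_pow, hvw, hhvw]
      exact theta (J := fun _ => True) (fun j _ => trivial)
        (fun f n _ => hPrSR f n) Y (CxZ_le_Minf hY1) hY2
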